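/- arXiv:2012.09824 — 2 statements merged into one kernel-verified Lean document; each statement's English description precedes it below -/
import Mathlib

section
/- For every integer k ≥ 2 and every ε > 0 there exist n_0 and θ_0 > 0 such that for all 0 < θ ≤ θ_0 and n ≥ n_0: in every k-graph H on n vertices, at most ε·C(n, k) edges of H are not θ-extensible. -/
open Finset

attribute [local instance] Classical.propDecidable

variable {α : Type*}

/-- The degree of a vertex `v` in a hypergraph `T`: the number of edges containing `v`. -/
def vdeg [DecidableEq α] (T : Finset (Finset α)) (v : α) : ℕ :=
  (T.filter fun e => v ∈ e).card

/-- The vertex set of a hypergraph: the union of its edges. -/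
def hverts [DecidableEq α] (T : Finset (Finset α)) : Finset α := T.sup id

/-- The maximum 1-degree of a hypergraph. -/
def hmaxDeg [DecidableEq α] (T : Finset (Finset α)) : ℕ := (hverts T).sup (vdeg T)

/-- `es` is a valid ordering of the edges of a tight `k`-tree: every edge is a `k`-set, and
every edge except the first contains a vertex `v` not in any previous edge with the rest of
the edge contained in some previous edge. -/
def ValidOrdering [DecidableEq α] (k : ℕ) (es : List (Finset α)) : Prop :=
  (∀ e ∈ es, e.card = k) ∧
  ∀ i, 0 < i → i < es.length →
    ∃ v ∈ es.getD i ∅,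
      (∀ j, j < i → v ∉ es.getD j ∅) ∧
      ∃ j, j < i ∧ (es.getD i ∅) \ {v} ⊆ es.getD j ∅

/-- `T` is a tight `k`-tree: its edges admit a valid ordering. -/
def IsTightTree [DecidableEq α] (k : ℕ) (T : Finset (Finset α)) : Prop :=
  ∃ es : List (Finset α), es ≠ [] ∧ es.Nodup ∧ es.toFinset = T ∧ ValidOrdering k es

/-- `f` belongs to the shadow of the `k`-graph `H`. -/
def InShadow [DecidableEq α] (k : ℕ) (H : Finset (Finset α)) (f : Finset α) : Prop :=
  f.card = k - 1 ∧ ∃ e ∈ H, f ⊆ e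

/-- `H` contains (a copy of) `T`. -/
def Contains {β : Type*} [DecidableEq α] [DecidableEq β]
    (H : Finset (Finset α)) (T : Finset (Finset β)) : Prop :=
  ∃ φ : β → α, Function.Injective φ ∧ ∀ e ∈ T, e.image φ ∈ H

/-- `Q` describes a copy of `K^(k)(2)` in `H`: `Q` is a set of `k` pairwise disjoint pairs of
vertices such that every transversal (one vertex from each pair) is an edge of `H`. -/
def IsK2Copy [DecidableEq α] (k : ℕ) (H : Finset (Finset α)) (Q : Finset (Finset α)) : Prop :=
  Q.card = k ∧ (∀ p ∈ Q, p.card = 2) ∧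
  (∀ p ∈ Q, ∀ q ∈ Q, p ≠ q → Disjoint p q) ∧
  (∀ e : Finset α, e ⊆ Q.sup id → (∀ p ∈ Q, (e ∩ p).card = 1) → e ∈ H)

/-- `d^K_H(e)`: the number of copies of `K^(k)(2)` in `H` containing the edge `e`. -/
noncomputable def extCount [Fintype α] [DecidableEq α] (k : ℕ) (H : Finset (Finset α))
    (e : Finset α) : ℕ :=
  (Finset.univ.filter fun Q : Finset (Finset α) =>
    IsK2Copy k H Q ∧ e ⊆ Q.sup id ∧ ∀ p ∈ Q, (e ∩ p).card = 1).card

namespace FewNonext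

variable {n k : ℕ}

/-- Select the `x` or `y` value in each coordinate according to `ω`. -/
def sel (x y : Fin k → Fin n) (ω : Fin k → Bool) : Fin k → Fin n :=
  fun i => if ω i then y i else x i

/-- Indicator of ordered edges of `B`. -/
noncomputable def g (B : Finset (Finset (Fin n))) (z : Fin k → Fin n) : ℝ :=
  if Function.Injective z ∧ Finset.image z Finset.univ ∈ B then 1 else 0

lemma g_nonneg (B : Finset (Finset (Fin n))) (z : Fin k → Fin n) : 0 ≤ g B z := by
  unfold g; split <;> norm_num

/-- Boolean vectors supported on the first `j` coordinates. -/
noncomputable def Om (k j : ℕ) : Finset (Fin k → Bool) :=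
  Finset.univ.filter fun ω => ∀ i : Fin k, j ≤ (i : ℕ) → ω i = false

noncomputable def A (B : Finset (Finset (Fin n))) (j : ℕ) (x y : Fin k → Fin n) : ℝ :=
  ∏ ω ∈ Om k j, g B (sel x y ω)

noncomputable def S (k : ℕ) (B : Finset (Finset (Fin n))) (j : ℕ) : ℝ :=
  ∑ x : Fin k → Fin n, ∑ y : Fin k → Fin n, A B j x y

lemma A_nonneg (B : Finset (Finset (Fin n))) (j : ℕ) (x y : Fin k → Fin n) :
    0 ≤ A B j x y :=
  Finset.prod_nonneg fun ω _ => g_nonneg B (sel x y ω)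

lemma S_nonneg (B : Finset (Finset (Fin n))) (j : ℕ) : 0 ≤ S k B j :=
  Finset.sum_nonneg fun x _ => Finset.sum_nonneg fun y _ => A_nonneg B j x y

/-- The key reindexing lemma: summing over the `j`-th coordinate. -/
lemma reindex (j : Fin k) (f : (Fin k → Fin n) → Fin n → ℝ)
    (hf : ∀ y s t, f (Function.update y j s) t = f y t) :
    ∑ y : Fin k → Fin n, ∑ t : Fin n, f y t = n * ∑ y : Fin k → Fin n, f y (y j) := by
  have hinv : Function.Involutive
      (fun p : (Fin k → Fin n) × Fin n => (Function.update p.1 j p.2, p.1 j)) := by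
    intro p
    simp [Function.update_idem, Function.update_self, Function.update_eq_self]
  calc ∑ y : Fin k → Fin n, ∑ t : Fin n, f y t
      = ∑ p : (Fin k → Fin n) × Fin n, f p.1 p.2 := (Fintype.sum_prod_type (f := fun p : (Fin k → Fin n) × Fin n => f p.1 p.2)).symm
    _ = ∑ p : (Fin k → Fin n) × Fin n, f (Function.update p.1 j p.2) (p.1 j) := by
        refine Fintype.sum_equiv hinv.toPerm _ _ fun p => ?_
        simp [Function.Involutive.coe_toPerm, Function.update_self, Function.update_idem,
          Function.update_eq_self]
    _ = ∑ p : (Fin k → Fin n) × Fin n, f p.1 (p.1 j) := by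
        refine Finset.sum_congr rfl fun p _ => ?_
        rw [hf]
    _ = ∑ y : Fin k → Fin n, ∑ _t : Fin n, f y (y j) :=
        Fintype.sum_prod_type (f := fun p : (Fin k → Fin n) × Fin n => f p.1 (p.1 j))
    _ = n * ∑ y : Fin k → Fin n, f y (y j) := by
        simp [Finset.sum_const, Finset.mul_sum]


lemma A_zero (B : Finset (Finset (Fin n))) (x y : Fin k → Fin n) : A B 0 x y = g B x := by
  have h : Om k 0 = {fun _ => false} := by
    ext ω
    simp only [Om, Finset.mem_filter, Finset.mem_univ, true_and, Finset.mem_singleton]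
    constructor
    · intro h; funext i; exact h i (Nat.zero_le _)
    · intro h i _; simp [h]
  rw [A, h, Finset.prod_singleton]
  congr 1

lemma A_last (B : Finset (Finset (Fin n))) (x y : Fin k → Fin n) :
    A B k x y = ∏ ω : Fin k → Bool, g B (sel x y ω) := by
  have h : Om k k = Finset.univ := by
    ext ω
    simp only [Om, Finset.mem_filter, Finset.mem_univ, true_and, iff_true]
    intro i hi
    exact absurd hi (by exact Nat.not_le.2 i.isLt)
  rw [A, h]

lemma mem_Om {j : ℕ} {ω : Fin k → Bool} :
    ω ∈ Om k j ↔ ∀ i : Fin k, j ≤ (i : ℕ) → ω i = false := by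
  simp [Om]

lemma A_succ (B : Finset (Finset (Fin n))) (j : Fin k) (x y : Fin k → Fin n) :
    A B ((j : ℕ) + 1) x y = A B j x y * A B j (Function.update x j (y j)) y := by
  rw [A, ← Finset.prod_filter_mul_prod_filter_not (Om k ((j:ℕ)+1)) (fun ω => ω j = false)]
  congr 1
  · -- the part with ω j = false is exactly `Om k j`
    rw [A]
    congr 1
    ext ω
    simp only [Finset.mem_filter, mem_Om]
    constructor
    · rintro ⟨h1, h2⟩ i hi
      rcases Nat.eq_or_lt_of_le hi with h | h
      · have : i = j := Fin.ext h.symm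
        rw [this]; exact h2
      · exact h1 i h
    · intro h
      exact ⟨fun i hi => h i (by omega), h j le_rfl⟩
  · -- the part with ω j = true
    rw [A]
    refine Finset.prod_nbij' (fun ω => Function.update ω j false)
      (fun ω => Function.update ω j true) ?_ ?_ ?_ ?_ ?_
    · intro ω hω
      simp only [Finset.mem_filter, mem_Om] at hω
      obtain ⟨h1, h2⟩ := hω
      rw [mem_Om]
      intro i hi
      show Function.update ω j false i = false
      by_cases hij : i = j
      · rw [hij]; simp
      · rw [Function.update_of_ne hij]
        exact h1 i (by omega)
    · intro ω hω
      rw [mem_Om] at hω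
      simp only [Finset.mem_filter, mem_Om]
      constructor
      · intro i hi
        show Function.update ω j true i = false
        have hij : i ≠ j := by
          intro h; rw [h] at hi; omega
        rw [Function.update_of_ne hij]
        exact hω i (by omega)
      · show ¬ Function.update ω j true j = false
        simp
    · intro ω hω
      simp only [Finset.mem_filter] at hω
      have ht : ω j = true := by simpa using hω.2
      show Function.update (Function.update ω j false) j true = ω
      rw [Function.update_idem, ← ht, Function.update_eq_self]
    · intro ω hω
      rw [mem_Om] at hω
      have ht : ω j = false := hω j le_rfl
      show Function.update (Function.update ω j true) j false = ω
      rw [Function.update_idem, ← ht, Function.update_eq_self]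
    · intro ω hω
      simp only [Finset.mem_filter] at hω
      have ht : ω j = true := by simpa using hω.2
      congr 1
      funext i
      show (if ω i = true then y i else x i) =
        if Function.update ω j false i = true then y i else Function.update x j (y j) i
      by_cases hij : i = j
      · subst hij; simp [ht]
      · simp [Function.update_of_ne hij]

lemma A_update_y (B : Finset (Finset (Fin n))) (j : Fin k) (x y : Fin k → Fin n) (s : Fin n) :
    A B j x (Function.update y j s) = A B j x y := by
  rw [A, A]
  refine Finset.prod_congr rfl fun ω hω => ?_
  rw [mem_Om] at hω
  congr 1
  funext i
  simp only [sel]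
  by_cases hij : i = j
  · subst hij; rw [hω i le_rfl]; simp
  · rw [Function.update_of_ne hij]


lemma step (hn : 0 < n) (B : Finset (Finset (Fin n))) (j : Fin k) :
    S k B (j : ℕ) ^ 2 ≤ (n : ℝ) ^ (2 * k) * S k B ((j : ℕ) + 1) := by
  set P : (Fin k → Fin n) → (Fin k → Fin n) → ℝ :=
    fun x y => ∑ s : Fin n, A B (j : ℕ) (Function.update x j s) y with hP
  have hPupd : ∀ x y u, P (Function.update x j u) y = P x y := by
    intro x y u
    simp only [hP]
    exact Finset.sum_congr rfl fun s _ => by rw [Function.update_idem]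
  have claim1 : ∀ y, ∑ x : Fin k → Fin n, P x y
      = n * ∑ x : Fin k → Fin n, A B (j : ℕ) x y := by
    intro y
    have h1 := reindex j (fun x s => A B (j : ℕ) (Function.update x j s) y)
      (fun x s t => by simp only [Function.update_idem])
    simp only [Function.update_eq_self] at h1
    simpa only [hP] using h1
  have claim2a : ∀ x, (n : ℝ) * ∑ y : Fin k → Fin n, A B ((j : ℕ) + 1) x y
      = ∑ y : Fin k → Fin n, A B (j : ℕ) x y * P x y := by
    intro x
    have h1 := reindex j
      (fun y t => A B (j : ℕ) x y * A B (j : ℕ) (Function.update x j t) y)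
      (fun y s t => by simp only [A_update_y])
    calc (n : ℝ) * ∑ y : Fin k → Fin n, A B ((j : ℕ) + 1) x y
        = (n : ℝ) * ∑ y : Fin k → Fin n,
            A B (j : ℕ) x y * A B (j : ℕ) (Function.update x j (y j)) y := by
          rw [Finset.mul_sum, Finset.mul_sum]
          exact Finset.sum_congr rfl fun y _ => by rw [A_succ]
      _ = ∑ y : Fin k → Fin n, ∑ t : Fin n,
            A B (j : ℕ) x y * A B (j : ℕ) (Function.update x j t) y := h1.symm
      _ = ∑ y : Fin k → Fin n, A B (j : ℕ) x y * P x y := by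
          refine Finset.sum_congr rfl fun y _ => ?_
          rw [hP, ← Finset.mul_sum]
  have claim2b : ∀ y, (n : ℝ) * ∑ x : Fin k → Fin n, A B (j : ℕ) x y * P x y
      = ∑ x : Fin k → Fin n, P x y ^ 2 := by
    intro y
    have h1 := reindex j (fun x s => A B (j : ℕ) (Function.update x j s) y * P x y)
      (fun x s t => by simp only [Function.update_idem, hPupd])
    simp only [Function.update_eq_self] at h1
    rw [← h1]
    refine Finset.sum_congr rfl fun x _ => ?_
    have : ∑ s : Fin n, A B (j : ℕ) (Function.update x j s) y * P x y
        = (∑ s : Fin n, A B (j : ℕ) (Function.update x j s) y) * P x y :=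
      (Finset.sum_mul _ _ _).symm
    rw [this, hP, sq]
  have e1 : ∑ y : Fin k → Fin n, ∑ x : Fin k → Fin n, P x y = n * S k B (j : ℕ) := by
    calc ∑ y : Fin k → Fin n, ∑ x : Fin k → Fin n, P x y
        = ∑ y : Fin k → Fin n, (n : ℝ) * ∑ x : Fin k → Fin n, A B (j : ℕ) x y :=
          Finset.sum_congr rfl fun y _ => claim1 y
      _ = (n : ℝ) * ∑ y : Fin k → Fin n, ∑ x : Fin k → Fin n, A B (j : ℕ) x y :=
          (Finset.mul_sum _ _ _).symm
      _ = (n : ℝ) * ∑ x : Fin k → Fin n, ∑ y : Fin k → Fin n, A B (j : ℕ) x y :=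
          congrArg (fun z => (n : ℝ) * z)
            (Finset.sum_comm (s := Finset.univ) (t := Finset.univ)
              (f := fun y x => A B (j : ℕ) x y))
      _ = n * S k B (j : ℕ) := by rw [S]
  have e2 : ∑ y : Fin k → Fin n, ∑ x : Fin k → Fin n, P x y ^ 2
      = (n : ℝ) ^ 2 * S k B ((j : ℕ) + 1) := by
    calc ∑ y : Fin k → Fin n, ∑ x : Fin k → Fin n, P x y ^ 2
        = ∑ y : Fin k → Fin n, (n : ℝ) * ∑ x : Fin k → Fin n, A B (j : ℕ) x y * P x y := by
          exact Finset.sum_congr rfl fun y _ => (claim2b y).symm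
      _ = (n : ℝ) * ∑ y : Fin k → Fin n, ∑ x : Fin k → Fin n, A B (j : ℕ) x y * P x y := by
          rw [Finset.mul_sum]
      _ = (n : ℝ) * ∑ x : Fin k → Fin n, ∑ y : Fin k → Fin n, A B (j : ℕ) x y * P x y :=
          congrArg (fun z => (n : ℝ) * z)
            (Finset.sum_comm (s := Finset.univ) (t := Finset.univ)
              (f := fun y x => A B (j : ℕ) x y * P x y))
      _ = (n : ℝ) * ∑ x : Fin k → Fin n, (n : ℝ) * ∑ y : Fin k → Fin n, A B ((j:ℕ)+1) x y := by
          rw [Finset.mul_sum, Finset.mul_sum]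
          exact Finset.sum_congr rfl fun x _ => by rw [claim2a]
      _ = (n : ℝ) ^ 2 * S k B ((j : ℕ) + 1) := by
          rw [S, ← Finset.mul_sum]
          ring
  have e3 : ∑ p : (Fin k → Fin n) × (Fin k → Fin n), P p.2 p.1
      = ∑ y : Fin k → Fin n, ∑ x : Fin k → Fin n, P x y :=
    Fintype.sum_prod_type (f := fun p : (Fin k → Fin n) × (Fin k → Fin n) => P p.2 p.1)
  have e4 : ∑ p : (Fin k → Fin n) × (Fin k → Fin n), P p.2 p.1 ^ 2
      = ∑ y : Fin k → Fin n, ∑ x : Fin k → Fin n, P x y ^ 2 :=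
    Fintype.sum_prod_type (f := fun p : (Fin k → Fin n) × (Fin k → Fin n) => P p.2 p.1 ^ 2)
  have hcard : (((Finset.univ : Finset ((Fin k → Fin n) × (Fin k → Fin n))).card : ℕ) : ℝ)
      = (n : ℝ) ^ (2 * k) := by
    simp only [Finset.card_univ, Fintype.card_prod, Fintype.card_fun, Fintype.card_fin]
    push_cast
    ring
  have cs : (∑ y : Fin k → Fin n, ∑ x : Fin k → Fin n, P x y) ^ 2
      ≤ (n : ℝ) ^ (2 * k) * ∑ y : Fin k → Fin n, ∑ x : Fin k → Fin n, P x y ^ 2 := by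
    have h := sq_sum_le_card_mul_sum_sq
      (s := (Finset.univ : Finset ((Fin k → Fin n) × (Fin k → Fin n))))
      (f := fun p => P p.2 p.1)
    rw [e3, e4, hcard] at h
    exact h
  have hn2 : (0 : ℝ) < (n : ℝ) ^ 2 := by positivity
  have key : (n : ℝ) ^ 2 * (S k B (j : ℕ) ^ 2)
      ≤ (n : ℝ) ^ 2 * ((n : ℝ) ^ (2 * k) * S k B ((j : ℕ) + 1)) := by
    calc (n : ℝ) ^ 2 * (S k B (j : ℕ) ^ 2) = ((n : ℝ) * S k B (j : ℕ)) ^ 2 := by ring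
      _ = (∑ y : Fin k → Fin n, ∑ x : Fin k → Fin n, P x y) ^ 2 := by rw [e1]
      _ ≤ (n : ℝ) ^ (2 * k) * ∑ y : Fin k → Fin n, ∑ x : Fin k → Fin n, P x y ^ 2 := cs
      _ = (n : ℝ) ^ (2 * k) * ((n : ℝ) ^ 2 * S k B ((j : ℕ) + 1)) := by rw [e2]
      _ = (n : ℝ) ^ 2 * ((n : ℝ) ^ (2 * k) * S k B ((j : ℕ) + 1)) := by ring
  exact le_of_mul_le_mul_left key hn2


lemma iter (hn : 0 < n) (B : Finset (Finset (Fin n))) :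
    ∀ j, j ≤ k → S k B 0 ^ (2 ^ j) ≤ (n : ℝ) ^ (2 * k * (2 ^ j - 1)) * S k B j := by
  intro j
  induction j with
  | zero => intro _; simp
  | succ j ih =>
    intro hj
    have hjk : j < k := lt_of_lt_of_le (Nat.lt_succ_self j) hj
    have h1 := ih (le_of_lt hjk)
    have h2 : S k B j ^ 2 ≤ (n : ℝ) ^ (2 * k) * S k B (j + 1) := by
      simpa using step hn B ⟨j, hjk⟩
    have hA : S k B 0 ^ (2 ^ (j + 1)) = (S k B 0 ^ (2 ^ j)) ^ 2 := by
      rw [← pow_mul, pow_succ]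
    calc S k B 0 ^ (2 ^ (j + 1)) = (S k B 0 ^ (2 ^ j)) ^ 2 := hA
      _ ≤ ((n : ℝ) ^ (2 * k * (2 ^ j - 1)) * S k B j) ^ 2 := by
          exact pow_le_pow_left₀ (pow_nonneg (S_nonneg B 0) _) h1 2
      _ = (n : ℝ) ^ (2 * (2 * k * (2 ^ j - 1))) * (S k B j) ^ 2 := by
          rw [mul_pow, ← pow_mul, mul_comm (2 * k * (2 ^ j - 1)) 2]
      _ ≤ (n : ℝ) ^ (2 * (2 * k * (2 ^ j - 1))) * ((n : ℝ) ^ (2 * k) * S k B (j + 1)) := by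
          exact mul_le_mul_of_nonneg_left h2 (by positivity)
      _ = (n : ℝ) ^ (2 * k * (2 ^ (j + 1) - 1)) * S k B (j + 1) := by
          rw [← mul_assoc, ← pow_add]
          congr 2
          obtain ⟨a, ha⟩ : ∃ a, 2 ^ j = a + 1 :=
            ⟨2 ^ j - 1, by have := Nat.one_le_two_pow (n := j); omega⟩
          rw [pow_succ, ha]
          simp only [Nat.add_sub_cancel]
          have h2b : (a + 1) * 2 - 1 = a * 2 + 1 := by omega
          rw [h2b]
          ring

lemma S_zero_eq (B : Finset (Finset (Fin n))) :
    S k B 0 = (n : ℝ) ^ k * ∑ z : Fin k → Fin n, g B z := by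
  rw [S]
  calc ∑ x : Fin k → Fin n, ∑ _y : Fin k → Fin n, A B 0 x ((fun y => y) _y)
      = ∑ x : Fin k → Fin n, ∑ _y : Fin k → Fin n, g B x :=
        Finset.sum_congr rfl fun x _ => Finset.sum_congr rfl fun y _ => A_zero B x y
    _ = ∑ x : Fin k → Fin n, (n : ℝ) ^ k * g B x := by
        refine Finset.sum_congr rfl fun x _ => ?_
        rw [Finset.sum_const, Finset.card_univ, Fintype.card_fun, Fintype.card_fin,
          Fintype.card_fin, nsmul_eq_mul]
        push_cast
        ring
    _ = (n : ℝ) ^ k * ∑ z : Fin k → Fin n, g B z := (Finset.mul_sum _ _ _).symm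

lemma sum_g_ge (hn : 0 < n) (B : Finset (Finset (Fin n))) (hB : ∀ e ∈ B, e.card = k) :
    (B.card : ℝ) ≤ ∑ z : Fin k → Fin n, g B z := by
  have hne : Nonempty (Fin n) := ⟨⟨0, hn⟩⟩
  have hsum : ∑ z : Fin k → Fin n, g B z
      = ((Finset.univ.filter fun z : Fin k → Fin n =>
          Function.Injective z ∧ Finset.image z Finset.univ ∈ B).card : ℝ) := by
    rw [← Finset.sum_boole]
    rfl
  rw [hsum]
  have hcard : B.card ≤ (Finset.univ.filter fun z : Fin k → Fin n =>
      Function.Injective z ∧ Finset.image z Finset.univ ∈ B).card := by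
    set F : Finset (Fin n) → (Fin k → Fin n) := fun e =>
      if h : e.card = k then (fun i => e.orderEmbOfFin h i) else fun _ => Classical.arbitrary _
      with hF
    have himg : ∀ e ∈ B, Finset.image (F e) Finset.univ = e := by
      intro e he
      ext a
      simp only [hF, dif_pos (hB e he), Finset.mem_image, Finset.mem_univ, true_and]
      constructor
      · rintro ⟨i, rfl⟩
        have := Finset.range_orderEmbOfFin e (hB e he)
        have : (e.orderEmbOfFin (hB e he)) i ∈ Set.range (e.orderEmbOfFin (hB e he)) :=
          Set.mem_range_self i
        rw [Finset.range_orderEmbOfFin] at this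
        exact this
      · intro ha
        have : a ∈ Set.range (e.orderEmbOfFin (hB e he)) := by
          rw [Finset.range_orderEmbOfFin]; exact ha
        obtain ⟨i, hi⟩ := this
        exact ⟨i, hi⟩
    refine Finset.card_le_card_of_injOn F ?_ ?_
    · intro e he
      simp only [Finset.mem_coe, Finset.mem_filter, Finset.mem_univ, true_and]
      constructor
      · intro i i' hii'
        simp only [hF, dif_pos (hB e he)] at hii'
        exact (e.orderEmbOfFin (hB e he)).injective hii'
      · rw [himg e he]; exact he
    · intro e he e' he' hee'
      rw [← himg e he, ← himg e' he', hee']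
  exact_mod_cast hcard

/-- A pair `(x, y)` is *good* if all transversal selections are ordered edges of `B` and
`x i ≠ y i` everywhere. -/
def goodp (B : Finset (Finset (Fin n))) (p : (Fin k → Fin n) × (Fin k → Fin n)) : Prop :=
  (∀ ω : Fin k → Bool, Function.Injective (sel p.1 p.2 ω) ∧
     Finset.image (sel p.1 p.2 ω) Finset.univ ∈ B) ∧ ∀ i, p.1 i ≠ p.2 i

noncomputable def D (k : ℕ) (B : Finset (Finset (Fin n))) :
    Finset ((Fin k → Fin n) × (Fin k → Fin n)) :=
  Finset.univ.filter (goodp B)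

lemma A_k_eq (B : Finset (Finset (Fin n))) (x y : Fin k → Fin n) :
    A B k x y = if (∀ ω : Fin k → Bool, Function.Injective (sel x y ω) ∧
      Finset.image (sel x y ω) Finset.univ ∈ B) then (1:ℝ) else 0 := by
  rw [A_last]
  simp only [g]
  rw [Fintype.prod_boole]

lemma card_D_ge (hn : 0 < n) (hk : 1 ≤ k) (B : Finset (Finset (Fin n))) :
    S k B k - k * (n : ℝ) ^ (2 * k - 1) ≤ ((D k B).card : ℝ) := by
  have h1 : S k B k = ∑ p : (Fin k → Fin n) × (Fin k → Fin n), A B k p.1 p.2 := by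
    rw [S]
    exact (Fintype.sum_prod_type
      (f := fun p : (Fin k → Fin n) × (Fin k → Fin n) => A B k p.1 p.2)).symm
  have hpt : ∀ p : (Fin k → Fin n) × (Fin k → Fin n), A B k p.1 p.2
      ≤ (if goodp B p then (1:ℝ) else 0) + (if ∃ i, p.1 i = p.2 i then (1:ℝ) else 0) := by
    intro p
    rw [A_k_eq]
    by_cases hc : ∀ ω : Fin k → Bool, Function.Injective (sel p.1 p.2 ω) ∧
      Finset.image (sel p.1 p.2 ω) Finset.univ ∈ B
    · rw [if_pos hc]
      by_cases hd : ∃ i, p.1 i = p.2 i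
      · rw [if_pos hd]
        have : (0:ℝ) ≤ if goodp B p then (1:ℝ) else 0 := by split <;> norm_num
        linarith
      · have hg : goodp B p := ⟨hc, fun i hi => hd ⟨i, hi⟩⟩
        rw [if_pos hg]
        have : (0:ℝ) ≤ if ∃ i, p.1 i = p.2 i then (1:ℝ) else 0 := by split <;> norm_num
        linarith
    · rw [if_neg hc]
      have h2 : (0:ℝ) ≤ if goodp B p then (1:ℝ) else 0 := by split <;> norm_num
      have h3 : (0:ℝ) ≤ if ∃ i, p.1 i = p.2 i then (1:ℝ) else 0 := by split <;> norm_num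
      linarith
  have hsplit : S k B k ≤ ((D k B).card : ℝ)
      + ∑ p : (Fin k → Fin n) × (Fin k → Fin n), (if ∃ i, p.1 i = p.2 i then (1:ℝ) else 0) := by
    rw [h1]
    calc ∑ p : (Fin k → Fin n) × (Fin k → Fin n), A B k p.1 p.2
        ≤ ∑ p : (Fin k → Fin n) × (Fin k → Fin n),
            ((if goodp B p then (1:ℝ) else 0) + (if ∃ i, p.1 i = p.2 i then (1:ℝ) else 0)) :=
          Finset.sum_le_sum fun p _ => hpt p
      _ = (∑ p : (Fin k → Fin n) × (Fin k → Fin n), (if goodp B p then (1:ℝ) else 0))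
          + ∑ p : (Fin k → Fin n) × (Fin k → Fin n), (if ∃ i, p.1 i = p.2 i then (1:ℝ) else 0) :=
          Finset.sum_add_distrib
      _ = ((D k B).card : ℝ)
          + ∑ p : (Fin k → Fin n) × (Fin k → Fin n), (if ∃ i, p.1 i = p.2 i then (1:ℝ) else 0) := by
          rw [Finset.sum_boole]
          rfl
  have hbad : ∑ p : (Fin k → Fin n) × (Fin k → Fin n), (if ∃ i, p.1 i = p.2 i then (1:ℝ) else 0)
      ≤ k * (n : ℝ) ^ (2 * k - 1) := by
    have hpt2 : ∀ p : (Fin k → Fin n) × (Fin k → Fin n),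
        (if ∃ i, p.1 i = p.2 i then (1:ℝ) else 0)
        ≤ ∑ i : Fin k, (if p.1 i = p.2 i then (1:ℝ) else 0) := by
      intro p
      by_cases h : ∃ i, p.1 i = p.2 i
      · rw [if_pos h]
        obtain ⟨i0, hi0⟩ := h
        calc (1:ℝ) = if p.1 i0 = p.2 i0 then (1:ℝ) else 0 := by rw [if_pos hi0]
          _ ≤ ∑ i : Fin k, (if p.1 i = p.2 i then (1:ℝ) else 0) :=
            Finset.single_le_sum (f := fun i => if p.1 i = p.2 i then (1:ℝ) else 0)
              (fun i _ => by split <;> norm_num) (Finset.mem_univ i0)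
      · rw [if_neg h]
        exact Finset.sum_nonneg fun i _ => by split <;> norm_num
    have hswap : ∑ p : (Fin k → Fin n) × (Fin k → Fin n),
          ∑ i : Fin k, (if p.1 i = p.2 i then (1:ℝ) else 0)
        = ∑ i : Fin k, ∑ p : (Fin k → Fin n) × (Fin k → Fin n),
          (if p.1 i = p.2 i then (1:ℝ) else 0) :=
      Finset.sum_comm
    have hfix : ∀ i : Fin k, ∑ p : (Fin k → Fin n) × (Fin k → Fin n),
        (if p.1 i = p.2 i then (1:ℝ) else 0) = (n : ℝ) ^ (2 * k - 1) := by
      intro i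
      have hinner : ∀ x : Fin k → Fin n,
          ∑ y : Fin k → Fin n, (if x i = y i then (1:ℝ) else 0) = (n : ℝ) ^ (k - 1) := by
        intro x
        have hr := reindex i (fun _y t => if x i = t then (1:ℝ) else 0)
          (fun y s t => rfl)
        have hl : ∑ _y : Fin k → Fin n, ∑ t : Fin n, (if x i = t then (1:ℝ) else 0)
            = (n : ℝ) ^ k := by
          have : ∀ _y : Fin k → Fin n, ∑ t : Fin n, (if x i = t then (1:ℝ) else 0) = 1 := by
            intro _y
            rw [Finset.sum_ite_eq]
            simp
          rw [Finset.sum_congr rfl fun y _ => this y, Finset.sum_const, Finset.card_univ,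
            Fintype.card_fun, Fintype.card_fin, Fintype.card_fin, nsmul_eq_mul]
          push_cast
          ring
        rw [hl] at hr
        have hnn : (n : ℝ) ≠ 0 := by positivity
        have hpow : (n : ℝ) ^ k = (n : ℝ) * (n : ℝ) ^ (k - 1) := by
          rw [← pow_succ']
          congr 1
          omega
        rw [hpow] at hr
        exact (mul_left_cancel₀ hnn hr).symm
      calc ∑ p : (Fin k → Fin n) × (Fin k → Fin n), (if p.1 i = p.2 i then (1:ℝ) else 0)
          = ∑ x : Fin k → Fin n, ∑ y : Fin k → Fin n, (if x i = y i then (1:ℝ) else 0) :=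
            Fintype.sum_prod_type (f := fun p : (Fin k → Fin n) × (Fin k → Fin n) =>
              if p.1 i = p.2 i then (1:ℝ) else 0)
        _ = ∑ _x : Fin k → Fin n, (n : ℝ) ^ (k - 1) :=
            Finset.sum_congr rfl fun x _ => hinner x
        _ = (n : ℝ) ^ (2 * k - 1) := by
            rw [Finset.sum_const, Finset.card_univ, Fintype.card_fun, Fintype.card_fin,
              Fintype.card_fin, nsmul_eq_mul]
            push_cast
            rw [← pow_add]
            congr 1
            omega
    calc ∑ p : (Fin k → Fin n) × (Fin k → Fin n), (if ∃ i, p.1 i = p.2 i then (1:ℝ) else 0)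
        ≤ ∑ p : (Fin k → Fin n) × (Fin k → Fin n),
            ∑ i : Fin k, (if p.1 i = p.2 i then (1:ℝ) else 0) :=
          Finset.sum_le_sum fun p _ => hpt2 p
      _ = ∑ i : Fin k, ∑ p : (Fin k → Fin n) × (Fin k → Fin n),
            (if p.1 i = p.2 i then (1:ℝ) else 0) := hswap
      _ = ∑ _i : Fin k, (n : ℝ) ^ (2 * k - 1) :=
          Finset.sum_congr rfl fun i _ => hfix i
      _ = k * (n : ℝ) ^ (2 * k - 1) := by
          rw [Finset.sum_const, Finset.card_univ, Fintype.card_fin, nsmul_eq_mul]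
  linarith


lemma goodp_pt_inj {B : Finset (Finset (Fin n))} {x y : Fin k → Fin n}
    (h : goodp B (x, y)) {i i' : Fin k} {b b' : Bool}
    (heq : (if b then y i else x i) = (if b' then y i' else x i')) : i = i' ∧ b = b' := by
  by_cases hii : i = i'
  · subst hii
    refine ⟨rfl, ?_⟩
    by_contra hbb
    have hxy := h.2 i
    cases b <;> cases b' <;> simp_all
  · exfalso
    set ω : Fin k → Bool := fun t => if t = i then b else if t = i' then b' else false with hω
    have h1 : sel x y ω i = (if b then y i else x i) := by
      simp only [sel, hω, if_pos rfl]
    have h2 : sel x y ω i' = (if b' then y i' else x i') := by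
      have hb : ω i' = b' := by
        show (if i' = i then b else if i' = i' then b' else false) = b'
        rw [if_neg (fun h => hii h.symm), if_pos rfl]
      simp only [sel, hb]
    exact hii ((h.1 ω).1 (h1.trans (heq.trans h2.symm)))

lemma pt_false (x y : Fin k → Fin n) (i : Fin k) :
    (if (false : Bool) then y i else x i) = x i := by simp

lemma pt_true (x y : Fin k → Fin n) (i : Fin k) :
    (if (true : Bool) then y i else x i) = y i := by simp

/-- The set of `k` pairs determined by `(x, y)`. -/
noncomputable def pairs (x y : Fin k → Fin n) : Finset (Finset (Fin n)) :=
  Finset.image (fun i => ({x i, y i} : Finset (Fin n))) Finset.univ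

lemma sel_mem_pair (x y : Fin k → Fin n) (ω : Fin k → Bool) (i : Fin k) :
    sel x y ω i ∈ ({x i, y i} : Finset (Fin n)) := by
  simp only [sel, Finset.mem_insert, Finset.mem_singleton]
  split
  · right; rfl
  · left; rfl

lemma pairs_inj {B : Finset (Finset (Fin n))} {x y : Fin k → Fin n} (h : goodp B (x, y)) :
    Function.Injective (fun i => ({x i, y i} : Finset (Fin n))) := by
  intro i i' hii'
  have hx : x i ∈ ({x i', y i'} : Finset (Fin n)) := by
    have : x i ∈ ({x i, y i} : Finset (Fin n)) := by simp
    rwa [show ({x i, y i} : Finset (Fin n)) = {x i', y i'} from hii'] at this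
  rcases Finset.mem_insert.mp hx with h' | h'
  · exact (goodp_pt_inj h (b := false) (b' := false)
      (by rw [pt_false, pt_false]; exact h')).1
  · rw [Finset.mem_singleton] at h'
    have := goodp_pt_inj h (b := false) (b' := true)
      (by rw [pt_false, pt_true]; exact h')
    exact absurd this.2 (by simp)

lemma transversal_eq {B : Finset (Finset (Fin n))} {x y : Fin k → Fin n}
    (h : goodp B (x, y)) {e : Finset (Fin n)}
    (hsub : e ⊆ (pairs x y).sup id) (hcard : ∀ p ∈ pairs x y, (e ∩ p).card = 1) :
    e = Finset.image (sel x y (fun i => decide (y i ∈ e))) Finset.univ := by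
  set ω : Fin k → Bool := fun i => decide (y i ∈ e) with hω
  have hsel : ∀ i, sel x y ω i ∈ e := by
    intro i
    by_cases hyi : y i ∈ e
    · have hωi : ω i = true := by simp [hω, hyi]
      simpa [sel, hωi] using hyi
    · have hωi : ω i = false := by simp [hω, hyi]
      have h1 := hcard _ (Finset.mem_image_of_mem _ (Finset.mem_univ i))
      obtain ⟨a, ha⟩ := Finset.card_eq_one.mp h1
      have haa : a ∈ e ∩ ({x i, y i} : Finset (Fin n)) := ha ▸ Finset.mem_singleton_self a
      rw [Finset.mem_inter] at haa
      have hax : a = x i ∨ a = y i := by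
        simpa [Finset.mem_insert, Finset.mem_singleton] using haa.2
      rcases hax with h' | h'
      · have : x i ∈ e := h' ▸ haa.1
        simpa [sel, hωi] using this
      · exact absurd (h' ▸ haa.1) hyi
  apply Finset.Subset.antisymm
  · intro v hv
    have hvsup := hsub hv
    obtain ⟨i, hvi⟩ : ∃ i, v = x i ∨ v = y i := by
      rw [pairs, Finset.sup_image] at hvsup
      simpa using hvsup
    have hpmem : ({x i, y i} : Finset (Fin n)) ∈ pairs x y :=
      Finset.mem_image_of_mem _ (Finset.mem_univ i)
    obtain ⟨a, ha⟩ := Finset.card_eq_one.mp (hcard _ hpmem)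
    have hva : v = a := by
      have : v ∈ e ∩ ({x i, y i} : Finset (Fin n)) := Finset.mem_inter.mpr ⟨hv, by
        simp only [Finset.mem_insert, Finset.mem_singleton]
        exact hvi⟩
      rw [ha] at this
      exact Finset.mem_singleton.mp this
    have hsa : sel x y ω i = a := by
      have : sel x y ω i ∈ e ∩ ({x i, y i} : Finset (Fin n)) :=
        Finset.mem_inter.mpr ⟨hsel i, sel_mem_pair x y ω i⟩
      rw [ha] at this
      exact Finset.mem_singleton.mp this
    rw [hva, ← hsa]
    exact Finset.mem_image_of_mem _ (Finset.mem_univ i)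
  · intro v hv
    obtain ⟨i, _, rfl⟩ := Finset.mem_image.mp hv
    exact hsel i

lemma pairs_isK2Copy {B : Finset (Finset (Fin n))} {x y : Fin k → Fin n}
    (h : goodp B (x, y)) : IsK2Copy k B (pairs x y) := by
  refine ⟨?_, ?_, ?_, ?_⟩
  · rw [pairs, Finset.card_image_of_injective _ (pairs_inj h), Finset.card_univ,
      Fintype.card_fin]
  · rintro p hp
    obtain ⟨i, _, rfl⟩ := Finset.mem_image.mp hp
    exact Finset.card_pair (h.2 i)
  · rintro p hp q hq hpq
    obtain ⟨i, _, rfl⟩ := Finset.mem_image.mp hp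
    obtain ⟨i', _, rfl⟩ := Finset.mem_image.mp hq
    have hii : i ≠ i' := fun h' => hpq (by rw [h'])
    rw [Finset.disjoint_left]
    intro a ha ha'
    simp only [Finset.mem_insert, Finset.mem_singleton] at ha ha'
    rcases ha with h1 | h1 <;> rcases ha' with h2 | h2
    · exact hii (goodp_pt_inj h (b := false) (b' := false)
        (by rw [pt_false, pt_false, ← h1, ← h2])).1
    · exact hii (goodp_pt_inj h (b := false) (b' := true)
        (by rw [pt_false, pt_true, ← h1, ← h2])).1
    · exact hii (goodp_pt_inj h (b := true) (b' := false)
        (by rw [pt_true, pt_false, ← h1, ← h2])).1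
    · exact hii (goodp_pt_inj h (b := true) (b' := true)
        (by rw [pt_true, pt_true, ← h1, ← h2])).1
  · intro e hsub hcard
    rw [transversal_eq h hsub hcard]
    exact (h.1 _).2


lemma mem_D_goodp {B : Finset (Finset (Fin n))} {p : (Fin k → Fin n) × (Fin k → Fin n)}
    (hp : p ∈ D k B) : goodp B (p.1, p.2) := by
  have := (Finset.mem_filter.mp hp).2
  rwa [Prod.mk.eta]

lemma isK2Copy_mono {B H : Finset (Finset (Fin n))} (hBH : B ⊆ H) {Q : Finset (Finset (Fin n))}
    (h : IsK2Copy k B Q) : IsK2Copy k H Q :=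
  ⟨h.1, h.2.1, h.2.2.1, fun e he1 he2 => hBH (h.2.2.2 e he1 he2)⟩

lemma sel_image_sub_sup (x y : Fin k → Fin n) (ω : Fin k → Bool) :
    Finset.image (sel x y ω) Finset.univ ⊆ (pairs x y).sup id := by
  intro a ha
  obtain ⟨i, _, rfl⟩ := Finset.mem_image.mp ha
  have hp : ({x i, y i} : Finset (Fin n)) ∈ pairs x y :=
    Finset.mem_image_of_mem _ (Finset.mem_univ i)
  exact (Finset.le_sup (f := id) hp) (sel_mem_pair x y ω i)

lemma sel_image_inter_pair {B : Finset (Finset (Fin n))} {x y : Fin k → Fin n}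
    (h : goodp B (x, y)) (ω : Fin k → Bool) (p : Finset (Fin n)) (hp : p ∈ pairs x y) :
    ((Finset.image (sel x y ω) Finset.univ) ∩ p).card = 1 := by
  obtain ⟨i, _, rfl⟩ := Finset.mem_image.mp hp
  have heq : (Finset.image (sel x y ω) Finset.univ) ∩ ({x i, y i} : Finset (Fin n))
      = {sel x y ω i} := by
    ext a
    simp only [Finset.mem_inter, Finset.mem_image, Finset.mem_univ, true_and,
      Finset.mem_singleton]
    constructor
    · rintro ⟨⟨t, rfl⟩, hap⟩
      simp only [Finset.mem_insert, Finset.mem_singleton] at hap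
      rcases hap with h' | h'
      · obtain ⟨hti, _⟩ := goodp_pt_inj h (i := t) (i' := i) (b := ω t) (b' := false)
          (by rw [pt_false]; exact h')
        subst hti; rfl
      · obtain ⟨hti, _⟩ := goodp_pt_inj h (i := t) (i' := i) (b := ω t) (b' := true)
          (by rw [pt_true]; exact h')
        subst hti; rfl
    · rintro rfl
      exact ⟨⟨i, rfl⟩, sel_mem_pair x y ω i⟩
  rw [heq, Finset.card_singleton]

lemma sel_image_inj {B : Finset (Finset (Fin n))} {x y : Fin k → Fin n} (h : goodp B (x, y)) :
    Function.Injective fun ω : Fin k → Bool => Finset.image (sel x y ω) Finset.univ := by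
  intro ω ω' he
  funext i
  by_contra hne
  have he' : Finset.image (sel x y ω) Finset.univ = Finset.image (sel x y ω') Finset.univ := he
  have hmem : sel x y ω i ∈ Finset.image (sel x y ω') Finset.univ := by
    rw [← he']
    exact Finset.mem_image_of_mem _ (Finset.mem_univ i)
  obtain ⟨t, _, ht⟩ := Finset.mem_image.mp hmem
  obtain ⟨hti, hb⟩ := goodp_pt_inj h (i := t) (i' := i) (b := ω' t) (b' := ω i) ht
  subst hti
  exact hne hb.symm


lemma pair_recover {a b a' b' : Fin n} (hab : a ≠ b) (hab' : a' ≠ b')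
    (hset : ({a, b} : Finset (Fin n)) = {a', b'}) (hdec : (a < b ↔ a' < b')) :
    a = a' ∧ b = b' := by
  have ha : a = a' ∨ a = b' := by
    have : a ∈ ({a', b'} : Finset (Fin n)) := by rw [← hset]; simp
    simpa using this
  have hb : b = a' ∨ b = b' := by
    have : b ∈ ({a', b'} : Finset (Fin n)) := by rw [← hset]; simp
    simpa using this
  rcases ha with ha | ha
  · refine ⟨ha, ?_⟩
    rcases hb with hb | hb
    · exact absurd (hb.trans ha.symm) (fun hc => hab hc.symm)
    · exact hb
  · have hb2 : b = a' := by
      rcases hb with hb | hb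
      · exact hb
      · exact absurd (ha.trans hb.symm) hab
    exfalso
    subst ha
    subst hb2
    rcases lt_trichotomy a b with hc | hc | hc
    · exact absurd (hdec.mp hc) (asymm hc)
    · exact hab hc
    · exact absurd (hdec.mpr hc) (asymm hc)

lemma card_D_le (B : Finset (Finset (Fin n))) :
    (D k B).card ≤ (k ^ k * 2 ^ k) * ((D k B).image fun p => pairs p.1 p.2).card := by
  refine Finset.card_le_mul_card_image _ _ ?_
  intro Q hQ
  obtain ⟨p0, hp0D, hp0⟩ := Finset.mem_image.mp hQ
  have hgood0 : goodp B (p0.1, p0.2) := mem_D_goodp hp0D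
  have hQk : Q.card = k := by
    rw [← hp0]
    exact (pairs_isK2Copy hgood0).1
  set t : Finset ((Fin k → Finset (Fin n)) × (Fin k → Bool)) :=
    (Fintype.piFinset fun _ : Fin k => Q) ×ˢ Finset.univ with ht
  have hcard_t : t.card = k ^ k * 2 ^ k := by
    rw [ht, Finset.card_product, Fintype.card_piFinset]
    simp [hQk, Fintype.card_fun]
  rw [← hcard_t]
  refine Finset.card_le_card_of_injOn
    (fun p => (fun i => ({p.1 i, p.2 i} : Finset (Fin n)), fun i => decide (p.1 i < p.2 i)))
    ?_ ?_
  · intro p hp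
    rw [Finset.mem_coe, Finset.mem_filter] at hp
    rw [ht, Finset.mem_coe, Finset.mem_product]
    constructor
    · rw [Fintype.mem_piFinset]
      intro i
      rw [← hp.2]
      exact Finset.mem_image_of_mem _ (Finset.mem_univ i)
    · exact Finset.mem_univ _
  · intro p hp p' hp' hee
    simp only [Finset.coe_filter, Set.mem_setOf_eq] at hp hp'
    have hg : goodp B (p.1, p.2) := mem_D_goodp hp.1
    have hg' : goodp B (p'.1, p'.2) := mem_D_goodp hp'.1
    have h1 : ∀ i, ({p.1 i, p.2 i} : Finset (Fin n)) = {p'.1 i, p'.2 i} :=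
      fun i => congrFun (congrArg Prod.fst hee) i
    have h2 : ∀ i, decide (p.1 i < p.2 i) = decide (p'.1 i < p'.2 i) :=
      fun i => congrFun (congrArg Prod.snd hee) i
    have hxy : ∀ i, p.1 i = p'.1 i ∧ p.2 i = p'.2 i := by
      intro i
      exact pair_recover (hg.2 i) (hg'.2 i) (h1 i) (decide_eq_decide.mp (h2 i))
    have e1 : p.1 = p'.1 := funext fun i => (hxy i).1
    have e2 : p.2 = p'.2 := funext fun i => (hxy i).2
    exact Prod.ext e1 e2


lemma sum_extCount_ge (B H : Finset (Finset (Fin n))) (hBH : B ⊆ H) :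
    2 ^ k * (((D k B).image fun p => pairs p.1 p.2).card)
      ≤ ∑ e ∈ B, extCount k H e := by
  set I := (D k B).image fun p => pairs p.1 p.2 with hI
  have hstep1 : ∀ e ∈ B, (I.filter fun Q =>
      e ⊆ Q.sup id ∧ ∀ p ∈ Q, (e ∩ p).card = 1).card ≤ extCount k H e := by
    intro e _he
    rw [extCount]
    apply Finset.card_le_card
    intro Q hQ
    rw [Finset.mem_filter] at hQ ⊢
    refine ⟨Finset.mem_univ _, ?_, hQ.2⟩
    obtain ⟨p0, hp0, hp0e⟩ := Finset.mem_image.mp hQ.1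
    have hg : goodp B (p0.1, p0.2) := mem_D_goodp hp0
    rw [← hp0e]
    exact isK2Copy_mono hBH (pairs_isK2Copy hg)
  have hswap : ∑ e ∈ B, ((I.filter fun Q =>
        e ⊆ Q.sup id ∧ ∀ p ∈ Q, (e ∩ p).card = 1).card)
      = ∑ Q ∈ I, ((B.filter fun e =>
        e ⊆ Q.sup id ∧ ∀ p ∈ Q, (e ∩ p).card = 1).card) := by
    simp_rw [Finset.card_filter]
    exact Finset.sum_comm
  have hQbound : ∀ Q ∈ I, 2 ^ k ≤ (B.filter fun e =>
      e ⊆ Q.sup id ∧ ∀ p ∈ Q, (e ∩ p).card = 1).card := by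
    intro Q hQ
    obtain ⟨p0, hp0, hp0e⟩ := Finset.mem_image.mp hQ
    have hg : goodp B (p0.1, p0.2) := mem_D_goodp hp0
    have hsub : Finset.image (fun ω : Fin k → Bool =>
        Finset.image (sel p0.1 p0.2 ω) Finset.univ) Finset.univ
        ⊆ B.filter fun e => e ⊆ Q.sup id ∧ ∀ p ∈ Q, (e ∩ p).card = 1 := by
      intro e he'
      obtain ⟨ω, _, rfl⟩ := Finset.mem_image.mp he'
      rw [Finset.mem_filter]
      refine ⟨(hg.1 ω).2, ?_, ?_⟩
      · rw [← hp0e]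
        exact sel_image_sub_sup _ _ _
      · intro p hp
        rw [← hp0e] at hp
        exact sel_image_inter_pair hg ω p hp
    calc 2 ^ k = (Finset.univ : Finset (Fin k → Bool)).card := by
          rw [Finset.card_univ, Fintype.card_fun, Fintype.card_bool, Fintype.card_fin]
      _ = (Finset.image (fun ω : Fin k → Bool =>
            Finset.image (sel p0.1 p0.2 ω) Finset.univ) Finset.univ).card :=
          (Finset.card_image_of_injective _ (sel_image_inj hg)).symm
      _ ≤ _ := Finset.card_le_card hsub
  calc 2 ^ k * I.card = ∑ _Q ∈ I, 2 ^ k := by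
        rw [Finset.sum_const, smul_eq_mul, mul_comm]
    _ ≤ ∑ Q ∈ I, ((B.filter fun e =>
          e ⊆ Q.sup id ∧ ∀ p ∈ Q, (e ∩ p).card = 1).card) := Finset.sum_le_sum hQbound
    _ = ∑ e ∈ B, ((I.filter fun Q =>
          e ⊆ Q.sup id ∧ ∀ p ∈ Q, (e ∩ p).card = 1).card) := hswap.symm
    _ ≤ ∑ e ∈ B, extCount k H e := Finset.sum_le_sum hstep1

end FewNonext

open FewNonext

/-- For every `k ≥ 2` and `ε > 0` there exist `n₀` and `θ₀ > 0` such that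
for all `0 < θ ≤ θ₀` and `n ≥ n₀`: in every `k`-graph `H` on `n` vertices, at most
`ε·C(n, k)` edges of `H` are not `θ`-extensible. -/
theorem few_nonextensible_edges (k : ℕ) (hk : 2 ≤ k) (ε : ℝ) (hε : 0 < ε) :
    ∃ (n₀ : ℕ) (θ₀ : ℝ), 0 < θ₀ ∧
      ∀ θ : ℝ, 0 < θ → θ ≤ θ₀ → ∀ n : ℕ, n₀ ≤ n →
      ∀ H : Finset (Finset (Fin n)), (∀ e ∈ H, e.card = k) →
      ((H.filter fun e =>
          ¬ θ * (((n - k).choose k : ℕ) : ℝ) ≤ (extCount k H e : ℝ)).card : ℝ)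
        ≤ ε * (n.choose k : ℝ) := by
  have hk1 : 1 ≤ k := le_trans (by norm_num) hk
  have hkR : (0:ℝ) < (k:ℝ) := by exact_mod_cast hk1
  set c : ℝ := ε / (2 ^ k * ((Nat.factorial k : ℕ) : ℝ)) with hcdef
  have hc0 : 0 < c := by
    apply div_pos hε
    have : (0:ℝ) < ((Nat.factorial k : ℕ) : ℝ) := by exact_mod_cast Nat.factorial_pos k
    positivity
  set c1 : ℝ := c ^ (2 ^ k) with hc1def
  have hc10 : 0 < c1 := pow_pos hc0 _
  set θ₀ : ℝ := c1 / (2 * (k : ℝ) ^ k) with hθ₀def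
  have hθ₀pos : 0 < θ₀ := by
    apply div_pos hc10
    positivity
  obtain ⟨N, hN⟩ := exists_nat_gt (2 * (k : ℝ) / c1)
  refine ⟨max (2 * k + 1) (N + 1), θ₀, hθ₀pos, ?_⟩
  intro θ hθ hθθ₀ n hn H hH
  by_contra hcon
  rw [not_le] at hcon
  set B := H.filter (fun e => ¬ θ * (((n - k).choose k : ℕ) : ℝ) ≤ (extCount k H e : ℝ))
    with hBdef
  have hBH : B ⊆ H := Finset.filter_subset _ _
  have hBcard : ∀ e ∈ B, e.card = k := fun e he => hH e (hBH he)
  have hn2k : 2 * k + 1 ≤ n := le_trans (le_max_left _ _) hn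
  have hnN : (N : ℝ) < (n : ℝ) := by
    have h1 : N + 1 ≤ n := le_trans (le_max_right _ _) hn
    exact_mod_cast lt_of_lt_of_le (Nat.lt_succ_self N) h1
  have hn0 : 0 < n := by omega
  have hnR : (0:ℝ) < (n : ℝ) := by exact_mod_cast hn0
  set m : ℝ := (B.card : ℝ) with hmdef
  have hm_lb : ε * (n.choose k : ℝ) < m := hcon
  have hfacR : (0:ℝ) < ((Nat.factorial k : ℕ) : ℝ) := by
    exact_mod_cast Nat.factorial_pos k
  -- lower bound on the binomial coefficient
  have hchoose_lb : ((n : ℝ)/2)^k / ((Nat.factorial k : ℕ) : ℝ) ≤ (n.choose k : ℝ) := by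
    have h1 := Nat.pow_le_choose (α := ℝ) k n
    refine le_trans ?_ h1
    have hle : (n:ℝ)/2 ≤ ((n + 1 - k : ℕ) : ℝ) := by
      have hkn : k ≤ n + 1 := by omega
      rw [Nat.cast_sub hkn]
      push_cast
      have h2 : (2*(k:ℝ)) ≤ (n:ℝ) := by exact_mod_cast (by omega : 2*k ≤ n)
      linarith
    have h2 : ((n:ℝ)/2)^k ≤ (((n + 1 - k : ℕ) ^ k : ℕ) : ℝ) := by
      push_cast
      exact pow_le_pow_left₀ (by positivity) hle k
    gcongr
  have hm_lb2 : c * (n:ℝ)^k ≤ m := by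
    have h1 : c * (n:ℝ)^k ≤ ε * (((n : ℝ)/2)^k / ((Nat.factorial k : ℕ) : ℝ)) := by
      apply le_of_eq
      rw [hcdef, div_pow]
      field_simp
    have h2 : ε * (((n : ℝ)/2)^k / ((Nat.factorial k : ℕ) : ℝ)) ≤ ε * (n.choose k : ℝ) :=
      mul_le_mul_of_nonneg_left hchoose_lb (le_of_lt hε)
    linarith
  -- lower bound on S₀
  have hS0 : (n:ℝ)^k * m ≤ S k B 0 := by
    rw [S_zero_eq]
    exact mul_le_mul_of_nonneg_left (sum_g_ge hn0 B hBcard) (by positivity)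
  have hS0' : c * (n:ℝ)^(2*k) ≤ S k B 0 := by
    have h1 : c * (n:ℝ)^(2*k) ≤ (n:ℝ)^k * (c * (n:ℝ)^k) := by
      apply le_of_eq
      rw [two_mul, pow_add]
      ring
    have h2 : (n:ℝ)^k * (c * (n:ℝ)^k) ≤ (n:ℝ)^k * m :=
      mul_le_mul_of_nonneg_left hm_lb2 (by positivity)
    linarith
  -- iterate the Cauchy-Schwarz step
  have hiter := iter hn0 B k le_rfl
  have hSk : c1 * (n:ℝ)^(2*k) ≤ S k B k := by
    have hE : (0:ℝ) < (n:ℝ)^(2*k*(2^k - 1)) := by positivity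
    have h2 : (c * (n:ℝ)^(2*k))^(2^k) ≤ S k B 0 ^ (2^k) :=
      pow_le_pow_left₀ (by positivity) hS0' _
    have hexp : 2*k*(2^k) = 2*k + 2*k*(2^k - 1) := by
      obtain ⟨a, ha⟩ : ∃ a, 2 ^ k = a + 1 :=
        ⟨2 ^ k - 1, by have := Nat.one_le_two_pow (n := k); omega⟩
      rw [ha]
      simp only [Nat.add_sub_cancel]
      ring
    have h3 : (c * (n:ℝ)^(2*k))^(2^k)
        = c1 * (n:ℝ)^(2*k) * (n:ℝ)^(2*k*(2^k - 1)) := by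
      rw [mul_pow, hc1def, ← pow_mul, mul_comm (2*k) (2^k), mul_comm (2^k) (2*k), hexp,
        pow_add]
      ring
    have h4 : c1 * (n:ℝ)^(2*k) * (n:ℝ)^(2*k*(2^k - 1))
        ≤ S k B k * (n:ℝ)^(2*k*(2^k - 1)) := by
      calc c1 * (n:ℝ)^(2*k) * (n:ℝ)^(2*k*(2^k - 1)) = (c * (n:ℝ)^(2*k))^(2^k) := h3.symm
        _ ≤ S k B 0 ^ (2^k) := h2
        _ ≤ (n:ℝ)^(2*k*(2^k - 1)) * S k B k := hiter
        _ = S k B k * (n:ℝ)^(2*k*(2^k - 1)) := mul_comm _ _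
    exact le_of_mul_le_mul_right h4 hE
  -- lower bound on |D|
  have hD1 : S k B k - k * (n : ℝ) ^ (2 * k - 1) ≤ ((D k B).card : ℝ) := card_D_ge hn0 hk1 B
  have hsmall : (k:ℝ) * (n:ℝ)^(2*k-1) < (c1/2) * (n:ℝ)^(2*k) := by
    have hcn : 2 * (k:ℝ) < c1 * (n : ℝ) := by
      have h1 : 2 * (k:ℝ) / c1 < (n : ℝ) := lt_trans hN hnN
      calc 2*(k:ℝ) = (2*(k:ℝ)/c1) * c1 := by field_simp
        _ < (n:ℝ) * c1 := mul_lt_mul_of_pos_right h1 hc10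
        _ = c1 * (n:ℝ) := mul_comm _ _
    have hp : (0:ℝ) < (n:ℝ)^(2*k-1) := by positivity
    have h2k : 2*k = (2*k-1) + 1 := by omega
    calc (k:ℝ) * (n:ℝ)^(2*k-1) < (c1 * (n:ℝ) / 2) * (n:ℝ)^(2*k-1) := by
          apply mul_lt_mul_of_pos_right ?_ hp
          linarith
      _ = (c1/2) * (n:ℝ)^(2*k) := by
          have hpow2 : (n:ℝ)^(2*k) = (n:ℝ)^(2*k-1) * (n:ℝ) := by
            rw [← pow_succ, ← h2k]
          rw [hpow2]
          ring
  have hD2 : (c1/2) * (n:ℝ)^(2*k) < ((D k B).card : ℝ) := by linarith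
  -- relate |D| to the number of distinct copies
  set I := (D k B).image (fun p : (Fin k → Fin n) × (Fin k → Fin n) => pairs p.1 p.2) with hIdef
  have hL1N := card_D_le (k := k) B
  have hL1 : ((D k B).card : ℝ) ≤ ((k:ℝ)^k * 2^k) * (I.card : ℝ) := by
    have := hL1N
    rw [hIdef]
    exact_mod_cast this
  have hIT : (c1/2) * (n:ℝ)^(2*k) < ((k:ℝ)^k * 2^k) * (I.card : ℝ) := lt_of_lt_of_le hD2 hL1
  -- lower bound the sum of extension counts
  have hL2N := sum_extCount_ge (k := k) B H hBH
  have hL2 : (2^k : ℝ) * (I.card : ℝ) ≤ ∑ e ∈ B, (extCount k H e : ℝ) := by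
    rw [hIdef]
    exact_mod_cast hL2N
  -- upper bound the sum of extension counts
  have hup : ∑ e ∈ B, (extCount k H e : ℝ) ≤ m * (θ * (((n - k).choose k : ℕ) : ℝ)) := by
    have hterm : ∀ e ∈ B, (extCount k H e : ℝ) ≤ θ * (((n - k).choose k : ℕ) : ℝ) := by
      intro e he
      rw [hBdef, Finset.mem_filter] at he
      exact le_of_lt (lt_of_not_ge he.2)
    calc ∑ e ∈ B, (extCount k H e : ℝ)
        ≤ ∑ _e ∈ B, θ * (((n - k).choose k : ℕ) : ℝ) := Finset.sum_le_sum hterm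
      _ = m * (θ * (((n - k).choose k : ℕ) : ℝ)) := by
          rw [Finset.sum_const, nsmul_eq_mul, hmdef]
  have hm_ub : m ≤ (n.choose k : ℝ) := by
    have hsub : B ⊆ Finset.powersetCard k Finset.univ := by
      intro e he
      rw [Finset.mem_powersetCard]
      exact ⟨Finset.subset_univ e, hBcard e he⟩
    have hcard := Finset.card_le_card hsub
    rw [Finset.card_powersetCard, Finset.card_univ, Fintype.card_fin] at hcard
    rw [hmdef]
    exact_mod_cast hcard
  have hCC : m * (θ * (((n - k).choose k : ℕ) : ℝ)) ≤ θ * (n:ℝ)^(2*k) := by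
    have h1 : (n.choose k : ℝ) ≤ (n:ℝ)^k := by exact_mod_cast Nat.choose_le_pow n k
    have h2 : (((n - k).choose k : ℕ) : ℝ) ≤ (n:ℝ)^k := by
      have h3 : (n - k).choose k ≤ (n - k)^k := Nat.choose_le_pow (n - k) k
      have h4 : (n - k)^k ≤ n^k := Nat.pow_le_pow_left (Nat.sub_le n k) k
      exact_mod_cast le_trans h3 h4
    calc m * (θ * (((n - k).choose k : ℕ) : ℝ)) = θ * (m * (((n - k).choose k : ℕ) : ℝ)) := by
          ring
      _ ≤ θ * ((n:ℝ)^k * (n:ℝ)^k) := by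
          apply mul_le_mul_of_nonneg_left ?_ (le_of_lt hθ)
          apply mul_le_mul (le_trans hm_ub h1) h2 ?_ (by positivity)
          positivity
      _ = θ * (n:ℝ)^(2*k) := by rw [two_mul, pow_add]
  -- final contradiction
  have hkk : (0:ℝ) < (k:ℝ)^k := by positivity
  have hθ₀eq : ((k:ℝ)^k) * (θ₀ * (n:ℝ)^(2*k)) = (c1/2) * (n:ℝ)^(2*k) := by
    rw [hθ₀def]
    field_simp
  have hfin1 : θ₀ * (n:ℝ)^(2*k) < (2^k : ℝ) * (I.card : ℝ) := by
    have h1 : ((k:ℝ)^k) * (θ₀ * (n:ℝ)^(2*k)) < ((k:ℝ)^k) * ((2^k : ℝ) * (I.card : ℝ)) := by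
      rw [hθ₀eq]
      calc (c1/2) * (n:ℝ)^(2*k) < ((k:ℝ)^k * 2^k) * (I.card : ℝ) := hIT
        _ = ((k:ℝ)^k) * ((2^k : ℝ) * (I.card : ℝ)) := by ring
    exact lt_of_mul_lt_mul_left h1 (le_of_lt hkk)
  have hfin2 : θ * (n:ℝ)^(2*k) ≤ θ₀ * (n:ℝ)^(2*k) :=
    mul_le_mul_of_nonneg_right hθθ₀ (by positivity)
  linarith
end

section
/- Let k, m ≥ 2 be integers, let d ∈ (0, 1), and let H be a k-partite k-graph with all k partition classes of size at most m. If H has at least d·m^k edges, then H has a non-empty subgraph H′ such that every (k−1)-set f in the shadow ∂H′ has degree at least dm/k in H′. -/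
open Finset

attribute [local instance] Classical.propDecidable

variable {α : Type*}

private lemma clean_aux [DecidableEq α] (k : ℕ) (c A : ℝ) (hc : 0 < c)
    (H B : Finset (Finset α))
    (hB : ∀ f : Finset α, f.card = k - 1 → (∃ e ∈ H, f ⊆ e) → f ∈ B)
    (hA : c * (B.card : ℝ) ≤ A) :
    ∀ G : Finset (Finset α), G ⊆ H →
      A - c * (((B \ G.biUnion fun e => e.powersetCard (k-1)).card : ℕ) : ℝ) < (G.card : ℝ) →
      ∃ H' : Finset (Finset α), H' ⊆ H ∧ H'.Nonempty ∧
        ∀ f : Finset α, f.card = k - 1 → (∃ e ∈ H', f ⊆ e) →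
          c ≤ ((H'.filter fun e => f ⊆ e).card : ℝ) := by
  intro G
  induction G using Finset.strongInduction with
  | _ G ih =>
    intro hGH hinv
    by_cases hgood : ∀ f : Finset α, f.card = k - 1 → (∃ e ∈ G, f ⊆ e) →
        c ≤ ((G.filter fun e => f ⊆ e).card : ℝ)
    · refine ⟨G, hGH, ?_, hgood⟩
      rw [← Finset.card_pos]
      have h1 : (((B \ G.biUnion fun e => e.powersetCard (k-1)).card : ℕ) : ℝ) ≤ (B.card : ℝ) := by
        exact_mod_cast Finset.card_le_card (Finset.sdiff_subset)
      have h2 : (0:ℝ) < (G.card : ℝ) := by nlinarith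
      exact_mod_cast h2
    · push_neg at hgood
      obtain ⟨f, hfc, ⟨e₀, he₀, hfe₀⟩, hdeg⟩ := hgood
      set G' := G.filter (fun e => ¬ f ⊆ e) with hG'def
      have hss : G' ⊂ G := Finset.filter_ssubset.mpr ⟨e₀, he₀, not_not.mpr hfe₀⟩
      have hcards : (G.filter fun e => f ⊆ e).card + G'.card = G.card := by
        rw [hG'def, Finset.card_filter_add_card_filter_not]
      have hfB : f ∈ B := hB f hfc ⟨e₀, hGH he₀, hfe₀⟩
      have hfG : f ∈ G.biUnion fun e => e.powersetCard (k-1) :=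
        mem_biUnion.mpr ⟨e₀, he₀, mem_powersetCard.mpr ⟨hfe₀, hfc⟩⟩
      have hfG' : f ∉ G'.biUnion fun e => e.powersetCard (k-1) := by
        intro h
        obtain ⟨e, he, hf⟩ := mem_biUnion.mp h
        exact (mem_filter.mp he).2 (mem_powersetCard.mp hf).1
      have hSsub : (B \ G.biUnion fun e => e.powersetCard (k-1)) ⊂
          (B \ G'.biUnion fun e => e.powersetCard (k-1)) := by
        refine (Finset.ssubset_iff_of_subset (Finset.sdiff_subset_sdiff (Finset.Subset.refl _)
          (Finset.biUnion_subset_biUnion_of_subset_left _ hss.subset))).mpr ?_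
        exact ⟨f, Finset.mem_sdiff.mpr ⟨hfB, hfG'⟩, fun h => (Finset.mem_sdiff.mp h).2 hfG⟩
      have hSlt : (B \ G.biUnion fun e => e.powersetCard (k-1)).card + 1 ≤
          (B \ G'.biUnion fun e => e.powersetCard (k-1)).card := Finset.card_lt_card hSsub
      have hinv' : A - c * (((B \ G'.biUnion fun e => e.powersetCard (k-1)).card : ℕ) : ℝ)
          < (G'.card : ℝ) := by
        have hS : ((B \ G.biUnion fun e => e.powersetCard (k-1)).card : ℝ) + 1 ≤
            ((B \ G'.biUnion fun e => e.powersetCard (k-1)).card : ℝ) := by exact_mod_cast hSlt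
        have hmul : c * (((B \ G.biUnion fun e => e.powersetCard (k-1)).card : ℝ) + 1) ≤
            c * ((B \ G'.biUnion fun e => e.powersetCard (k-1)).card : ℝ) :=
          mul_le_mul_of_nonneg_left hS hc.le
        have hcard' : (G'.card : ℝ) = (G.card : ℝ) - ((G.filter fun e => f ⊆ e).card : ℝ) := by
          have := hcards
          push_cast [← this]
          ring
        linarith
      exact ih G' hss (hss.subset.trans hGH) hinv'


private lemma shadow_card_le [DecidableEq α] (k m : ℕ) (hk : 2 ≤ k)
    (H : Finset (Finset α)) (hH : ∀ e ∈ H, e.card = k)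
    (V : Fin k → Finset α)
    (hVsize : ∀ i, (V i).card ≤ m)
    (hVdisj : ∀ i j, i ≠ j → Disjoint (V i) (V j))
    (hpart : ∀ e ∈ H, ∀ i, (e ∩ V i).card = 1) :
    (H.biUnion fun e => e.powersetCard (k-1)).card ≤ k * m ^ (k-1) := by
  set B := H.biUnion fun e => e.powersetCard (k-1) with hBdef
  -- every vertex of an edge lies in some class
  have hedge_cover : ∀ e ∈ H, ∀ x ∈ e, ∃ j, x ∈ V j := by
    intro e he x hx
    have hdisj : ∀ i ∈ (univ : Finset (Fin k)), ∀ j ∈ univ, i ≠ j →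
        Disjoint (e ∩ V i) (e ∩ V j) := fun i _ j _ hij =>
      (hVdisj i j hij).mono inter_subset_right inter_subset_right
    have hcard : (univ.biUnion fun j => e ∩ V j).card = k := by
      rw [Finset.card_biUnion hdisj]
      simp [hpart e he]
    have hsub : (univ.biUnion fun j => e ∩ V j) ⊆ e := by
      intro y hy
      obtain ⟨j, _, hy⟩ := mem_biUnion.mp hy
      exact (mem_inter.mp hy).1
    have heq : (univ.biUnion fun j => e ∩ V j) = e :=
      Finset.eq_of_subset_of_card_le hsub (by rw [hcard, hH e he])
    rw [← heq] at hx
    obtain ⟨j, _, hj⟩ := mem_biUnion.mp hx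
    exact ⟨j, (mem_inter.mp hj).2⟩
  -- key structural facts about shadow elements
  have hkey : ∀ f ∈ B, ∀ i : Fin k, f ∩ V i = ∅ →
      ∀ j : Fin k, j ≠ i → (f ∩ V j).card = 1 := by
    intro f hf i hi j hji
    obtain ⟨e, he, hfe⟩ := mem_biUnion.mp hf
    obtain ⟨hsub, hcard⟩ := mem_powersetCard.mp hfe
    have hdisj : ∀ a ∈ (univ : Finset (Fin k)), ∀ b ∈ univ, a ≠ b →
        Disjoint (f ∩ V a) (f ∩ V b) := fun a _ b _ hab =>
      (hVdisj a b hab).mono inter_subset_right inter_subset_right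
    have hfeq : (univ.biUnion fun j => f ∩ V j) = f := by
      apply Finset.Subset.antisymm
      · intro y hy
        obtain ⟨a, _, hy⟩ := mem_biUnion.mp hy
        exact (mem_inter.mp hy).1
      · intro y hy
        obtain ⟨a, ha⟩ := hedge_cover e he y (hsub hy)
        exact mem_biUnion.mpr ⟨a, mem_univ a, mem_inter.mpr ⟨hy, ha⟩⟩
    have hsum : ∑ a : Fin k, (f ∩ V a).card = k - 1 := by
      rw [← Finset.card_biUnion hdisj, hfeq, hcard]
    have hle : ∀ a : Fin k, (f ∩ V a).card ≤ 1 := by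
      intro a
      calc (f ∩ V a).card ≤ (e ∩ V a).card :=
            Finset.card_le_card (Finset.inter_subset_inter_right hsub)
        _ = 1 := hpart e he a
    have hsum' : ∑ a ∈ univ.erase i, (f ∩ V a).card = k - 1 := by
      rw [← Finset.add_sum_erase _ _ (mem_univ i)] at hsum
      simpa [hi] using hsum
    by_contra hne
    have hj0 : (f ∩ V j).card = 0 := by have := hle j; omega
    have hjmem : j ∈ univ.erase i := mem_erase.mpr ⟨hji, mem_univ j⟩
    have hsplit : ∑ a ∈ univ.erase i, (f ∩ V a).card
        = (f ∩ V j).card + ∑ a ∈ (univ.erase i).erase j, (f ∩ V a).card :=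
      (Finset.add_sum_erase _ _ hjmem).symm
    have hrest : ∑ a ∈ (univ.erase i).erase j, (f ∩ V a).card
        ≤ ((univ.erase i).erase j).card * 1 := by
      have := Finset.sum_le_card_nsmul ((univ.erase i).erase j)
        (fun a => (f ∩ V a).card) 1 (fun a _ => hle a)
      simpa using this
    have hcard1 : ((univ.erase i).erase j).card = k - 2 := by
      rw [Finset.card_erase_of_mem hjmem, Finset.card_erase_of_mem (mem_univ i)]
      simp only [Finset.card_univ, Fintype.card_fin]
      omega
    omega
  -- cover B by the classes it misses
  have hcover : B ⊆ univ.biUnion fun i : Fin k => B.filter fun f => f ∩ V i = ∅ := by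
    intro f hf
    obtain ⟨e, he, hfe⟩ := mem_biUnion.mp hf
    obtain ⟨hsub, hcard⟩ := mem_powersetCard.mp hfe
    have hdisj : ∀ a ∈ (univ : Finset (Fin k)), ∀ b ∈ univ, a ≠ b →
        Disjoint (f ∩ V a) (f ∩ V b) := fun a _ b _ hab =>
      (hVdisj a b hab).mono inter_subset_right inter_subset_right
    have hfeq : (univ.biUnion fun j => f ∩ V j) = f := by
      apply Finset.Subset.antisymm
      · intro y hy
        obtain ⟨a, _, hy⟩ := mem_biUnion.mp hy
        exact (mem_inter.mp hy).1
      · intro y hy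
        obtain ⟨a, ha⟩ := hedge_cover e he y (hsub hy)
        exact mem_biUnion.mpr ⟨a, mem_univ a, mem_inter.mpr ⟨hy, ha⟩⟩
    have hsum : ∑ a : Fin k, (f ∩ V a).card = k - 1 := by
      rw [← Finset.card_biUnion hdisj, hfeq, hcard]
    have hle : ∀ a : Fin k, (f ∩ V a).card ≤ 1 := by
      intro a
      calc (f ∩ V a).card ≤ (e ∩ V a).card :=
            Finset.card_le_card (Finset.inter_subset_inter_right hsub)
        _ = 1 := hpart e he a
    have : ∃ i : Fin k, (f ∩ V i).card = 0 := by
      by_contra hno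
      push_neg at hno
      have h1 : ∀ a : Fin k, 1 ≤ (f ∩ V a).card := fun a => by have := hno a; omega
      have : (k : ℕ) ≤ ∑ a : Fin k, (f ∩ V a).card := by
        calc (k:ℕ) = ∑ _a : Fin k, 1 := by simp
          _ ≤ ∑ a : Fin k, (f ∩ V a).card := Finset.sum_le_sum (fun a _ => h1 a)
      omega
    obtain ⟨i, hi⟩ := this
    exact mem_biUnion.mpr ⟨i, mem_univ i,
      mem_filter.mpr ⟨hf, Finset.card_eq_zero.mp hi⟩⟩
  -- bound each piece via an injection into a pi-set
  have hpiece : ∀ i : Fin k, (B.filter fun f => f ∩ V i = ∅).card ≤ m ^ (k - 1) := by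
    intro i
    have hinj : (B.filter fun f => f ∩ V i = ∅).card ≤
        ((univ.erase i).pi fun j => (V j).powersetCard 1).card := by
      apply Finset.card_le_card_of_injOn
        (fun f => fun j (_ : j ∈ univ.erase i) => f ∩ V j)
      · intro f hf
        rw [Finset.mem_coe, Finset.mem_pi]
        intro j hj
        obtain ⟨hfB, hfi⟩ := mem_filter.mp hf
        refine mem_powersetCard.mpr ⟨inter_subset_right, ?_⟩
        exact hkey f hfB i hfi j (mem_erase.mp hj).1
      · intro f hf g hg hfg
        obtain ⟨hfB, hfi⟩ := mem_filter.mp (by exact hf)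
        obtain ⟨hgB, hgi⟩ := mem_filter.mp (by exact hg)
        have hcongr : ∀ j : Fin k, j ≠ i → f ∩ V j = g ∩ V j := by
          intro j hj
          exact congrFun (congrFun hfg j) (mem_erase.mpr ⟨hj, mem_univ j⟩)
        have hrep : ∀ h : Finset α, h ∈ B → h ∩ V i = ∅ →
            h = (univ.erase i).biUnion fun j => h ∩ V j := by
          intro h hhB hhi
          obtain ⟨e, he, hfe⟩ := mem_biUnion.mp hhB
          obtain ⟨hsub, _⟩ := mem_powersetCard.mp hfe
          apply Finset.Subset.antisymm
          · intro y hy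
            obtain ⟨a, ha⟩ := hedge_cover e he y (hsub hy)
            have hai : a ≠ i := by
              intro h'
              subst h'
              have : y ∈ h ∩ V a := mem_inter.mpr ⟨hy, ha⟩
              rw [hhi] at this
              exact absurd this (Finset.notMem_empty y)
            exact mem_biUnion.mpr ⟨a, mem_erase.mpr ⟨hai, mem_univ a⟩,
              mem_inter.mpr ⟨hy, ha⟩⟩
          · intro y hy
            obtain ⟨a, _, hy⟩ := mem_biUnion.mp hy
            exact (mem_inter.mp hy).1
        rw [hrep f hfB hfi, hrep g hgB hgi]
        exact Finset.biUnion_congr rfl (fun j hj => hcongr j (mem_erase.mp hj).1)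
    refine hinj.trans ?_
    rw [Finset.card_pi]
    calc ∏ j ∈ univ.erase i, ((V j).powersetCard 1).card
        ≤ m ^ (univ.erase i).card := by
          apply Finset.prod_le_pow_card
          intro j _
          rw [Finset.card_powersetCard, Nat.choose_one_right]
          exact hVsize j
      _ = m ^ (k - 1) := by
          rw [Finset.card_erase_of_mem (mem_univ i)]
          simp
  calc B.card ≤ (univ.biUnion fun i : Fin k => B.filter fun f => f ∩ V i = ∅).card :=
        Finset.card_le_card hcover
    _ ≤ ∑ i : Fin k, (B.filter fun f => f ∩ V i = ∅).card := Finset.card_biUnion_le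
    _ ≤ ∑ _i : Fin k, m ^ (k - 1) := Finset.sum_le_sum (fun i _ => hpiece i)
    _ = k * m ^ (k - 1) := by simp [mul_comm]


/-- **Cleaning Lemma.** Let `k, m ≥ 2`, `d ∈ (0,1)`, and let `H` be a
`k`-partite `k`-graph with all partition classes of size at most `m`. If `H` has at least
`d·m^k` edges, then `H` has a nonempty subgraph `H'` in which every `(k−1)`-set of the shadow
has degree at least `dm/k`. -/
theorem cleaning_lemma [DecidableEq α] (k m : ℕ) (hk : 2 ≤ k) (hm : 2 ≤ m)
    (d : ℝ) (hd0 : 0 < d) (hd1 : d < 1)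
    (H : Finset (Finset α)) (hH : ∀ e ∈ H, e.card = k)
    (V : Fin k → Finset α)
    (hVsize : ∀ i, (V i).card ≤ m)
    (hVdisj : ∀ i j, i ≠ j → Disjoint (V i) (V j))
    (hpart : ∀ e ∈ H, ∀ i, (e ∩ V i).card = 1)
    (hcount : d * (m : ℝ) ^ k ≤ (H.card : ℝ)) :
    ∃ H' : Finset (Finset α), H' ⊆ H ∧ H'.Nonempty ∧
      ∀ f : Finset α, f.card = k - 1 → (∃ e ∈ H', f ⊆ e) →
        d * (m : ℝ) / (k : ℝ) ≤ ((H'.filter fun e => f ⊆ e).card : ℝ) := by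
  have hk0 : (0:ℝ) < (k:ℝ) := by
    have : (0:ℕ) < k := by omega
    exact_mod_cast this
  have hm0 : (0:ℝ) < (m:ℝ) := by
    have : (0:ℕ) < m := by omega
    exact_mod_cast this
  set c : ℝ := d * (m:ℝ) / (k:ℝ) with hcdef
  have hc : 0 < c := div_pos (mul_pos hd0 hm0) hk0
  set B := H.biUnion fun e => e.powersetCard (k-1) with hBdef
  have hB : ∀ f : Finset α, f.card = k - 1 → (∃ e ∈ H, f ⊆ e) → f ∈ B := by
    rintro f hfc ⟨e, he, hfe⟩
    exact mem_biUnion.mpr ⟨e, he, mem_powersetCard.mpr ⟨hfe, hfc⟩⟩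
  have hA : c * (B.card : ℝ) ≤ d * (m:ℝ) ^ k := by
    have h1 : (B.card : ℝ) ≤ (k:ℝ) * (m:ℝ) ^ (k-1) := by
      exact_mod_cast shadow_card_le k m hk H hH V hVsize hVdisj hpart
    have hmm : (m:ℝ) ^ k = (m:ℝ) * (m:ℝ) ^ (k-1) := by
      rw [← pow_succ']
      congr 1
      omega
    calc c * (B.card : ℝ) ≤ c * ((k:ℝ) * (m:ℝ) ^ (k-1)) :=
          mul_le_mul_of_nonneg_left h1 hc.le
      _ = d * (m:ℝ) ^ k := by
          rw [hmm, hcdef]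
          field_simp
  have Hpos : (0:ℝ) < (H.card : ℝ) :=
    lt_of_lt_of_le (mul_pos hd0 (pow_pos hm0 k)) hcount
  by_cases hgood : ∀ f : Finset α, f.card = k - 1 → (∃ e ∈ H, f ⊆ e) →
      c ≤ ((H.filter fun e => f ⊆ e).card : ℝ)
  · refine ⟨H, Finset.Subset.refl H, ?_, hgood⟩
    rw [← Finset.card_pos]
    exact_mod_cast Hpos
  · push_neg at hgood
    obtain ⟨f, hfc, ⟨e₀, he₀, hfe₀⟩, hdeg⟩ := hgood
    set G₁ := H.filter (fun e => ¬ f ⊆ e) with hG₁def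
    have hfB : f ∈ B := hB f hfc ⟨e₀, he₀, hfe₀⟩
    have hfG₁ : f ∉ G₁.biUnion fun e => e.powersetCard (k-1) := by
      intro h
      obtain ⟨e, he, hf'⟩ := mem_biUnion.mp h
      exact (mem_filter.mp he).2 (mem_powersetCard.mp hf').1
    have hS1 : 1 ≤ (B \ G₁.biUnion fun e => e.powersetCard (k-1)).card := by
      rw [Nat.one_le_iff_ne_zero, ← Nat.pos_iff_ne_zero, Finset.card_pos]
      exact ⟨f, Finset.mem_sdiff.mpr ⟨hfB, hfG₁⟩⟩
    have hcards : (H.filter fun e => f ⊆ e).card + G₁.card = H.card := by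
      rw [hG₁def, Finset.card_filter_add_card_filter_not]
    have hinv : d * (m:ℝ) ^ k -
        c * (((B \ G₁.biUnion fun e => e.powersetCard (k-1)).card : ℕ) : ℝ) < (G₁.card : ℝ) := by
      have h1 : (1:ℝ) ≤ ((B \ G₁.biUnion fun e => e.powersetCard (k-1)).card : ℝ) := by
        exact_mod_cast hS1
      have hmul : c * 1 ≤ c * ((B \ G₁.biUnion fun e => e.powersetCard (k-1)).card : ℝ) :=
        mul_le_mul_of_nonneg_left h1 hc.le
      have hcard' : (G₁.card : ℝ) = (H.card : ℝ) - ((H.filter fun e => f ⊆ e).card : ℝ) := by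
        have := hcards
        push_cast [← this]
        ring
      linarith
    exact clean_aux k c (d * (m:ℝ) ^ k) hc H B hB hA G₁ (Finset.filter_subset _ _) hinv
end
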